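/- Let h0 and h1 be real random variables with h1 ≤ h0 almost surely, let k ∈ ℝ, and define h := min(h0, max(h1, k)). Then P(h = k) = P(h1 ≤ k) − P(h0 < k). In particular, if the CDF F0 of h0 is continuous at k, then P(h = k) = F1(k) − F0(k), where F1 is the CDF of h1. -/

import Mathlib

open MeasureTheory Filter

/-- The bunching probability (Equation bunchprob of the paper): with `h1 ≤ h0`
a.s. and observed hours `h = min(h0, max(h1, k))`, the mass at the kink is
`P(h = k) = P(h1 ≤ k) - P(h0 < k)`; if moreover the CDF `F0` of `h0` is
continuous at `k`, then `P(h = k) = F1(k) - F0(k)`. -/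
theorem stmt3 {Ω : Type*} [MeasurableSpace Ω] (μ : Measure Ω)
    [IsProbabilityMeasure μ]
    (h0 h1 : Ω → ℝ) (hm0 : Measurable h0) (hm1 : Measurable h1)
    (hle : ∀ᵐ ω ∂μ, h1 ω ≤ h0 ω) (k : ℝ)
    (h : Ω → ℝ) (hdef : h = fun ω => min (h0 ω) (max (h1 ω) k))
    (F0 F1 : ℝ → ℝ)
    (hF0 : F0 = fun t => (μ {ω | h0 ω ≤ t}).toReal)
    (hF1 : F1 = fun t => (μ {ω | h1 ω ≤ t}).toReal) :
    (μ {ω | h ω = k}).toReal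
      = (μ {ω | h1 ω ≤ k}).toReal - (μ {ω | h0 ω < k}).toReal ∧
    (ContinuousAt F0 k → (μ {ω | h ω = k}).toReal = F1 k - F0 k) := by
  subst hdef
  set K : Set Ω := {ω | min (h0 ω) (max (h1 ω) k) = k} with hK
  set S1 : Set Ω := {ω | h1 ω ≤ k} with hS1
  set S0 : Set Ω := {ω | h0 ω < k} with hS0
  -- a.e., S1 = K ∪ S0
  have hae : S1 =ᵐ[μ] ((K ∪ S0 : Set Ω)) := by
    filter_upwards [hle] with ω hω
    show (h1 ω ≤ k) = (min (h0 ω) (max (h1 ω) k) = k ∨ h0 ω < k)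
    apply propext
    constructor
    · intro h1k
      rcases lt_or_ge (h0 ω) k with h0k | h0k
      · exact Or.inr h0k
      · left
        rw [max_eq_right h1k, min_eq_right h0k]
    · rintro (hmin | h0k)
      · by_contra hc
        push_neg at hc
        rw [max_eq_left hc.le, min_eq_right hω] at hmin
        exact absurd hmin (ne_of_gt hc)
      · exact le_trans hω h0k.le
  have hdisj : Disjoint K S0 := by
    rw [Set.disjoint_left]
    intro ω hωK hωS0
    have : min (h0 ω) (max (h1 ω) k) ≤ h0 ω := min_le_left _ _
    rw [hωK] at this
    exact absurd (lt_of_le_of_lt this hωS0) (lt_irrefl k)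
  have hKm : MeasurableSet K :=
    (hm0.min (hm1.max measurable_const)) (measurableSet_singleton k)
  have hS0m : MeasurableSet S0 := hm0 measurableSet_Iio
  have key : μ S1 = μ K + μ S0 := by
    rw [measure_congr hae, measure_union hdisj hS0m]
  have hfin : ∀ s : Set Ω, μ s ≠ ⊤ := fun s => measure_ne_top μ s
  have main : (μ K).toReal = (μ S1).toReal - (μ S0).toReal := by
    rw [key, ENNReal.toReal_add (hfin K) (hfin S0)]
    ring
  refine ⟨main, fun hcont => ?_⟩
  -- show (μ S0).toReal = F0 k
  have hF0S0 : (μ S0).toReal = F0 k := by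
    set u : ℕ → ℝ := fun n => k - 1 / (n + 1) with hu
    have hmono : Monotone fun n : ℕ => {ω | h0 ω ≤ u n} := by
      intro m n hmn ω hω
      have : u m ≤ u n := by
        simp only [hu]
        have : (1 : ℝ) / (n + 1) ≤ 1 / (m + 1) := by
          apply one_div_le_one_div_of_le
          · positivity
          · exact_mod_cast add_le_add_left (Nat.cast_le.mpr hmn) 1
        linarith
      exact le_trans hω this
    have hunion : (⋃ n, {ω | h0 ω ≤ u n}) = S0 := by
      ext ω
      simp only [Set.mem_iUnion, Set.mem_setOf_eq, hS0]
      constructor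
      · rintro ⟨n, hn⟩
        have : u n < k := by
          simp only [hu]
          have : (0:ℝ) < 1 / (n + 1) := by positivity
          linarith
        exact lt_of_le_of_lt hn this
      · intro hω
        obtain ⟨n, hn⟩ := exists_nat_one_div_lt (sub_pos.mpr hω)
        exact ⟨n, by simp only [hu]; linarith⟩
    have htend1 : Tendsto (fun n => μ {ω | h0 ω ≤ u n}) atTop (nhds (μ S0)) := by
      rw [← hunion]
      exact tendsto_measure_iUnion_atTop hmono
    have htend2 : Tendsto (fun n => (μ {ω | h0 ω ≤ u n}).toReal) atTop
        (nhds (μ S0).toReal) :=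
      (ENNReal.tendsto_toReal (hfin S0)).comp htend1
    have hukt : Tendsto u atTop (nhds k) := by
      have : Tendsto (fun n : ℕ => 1 / ((n : ℝ) + 1)) atTop (nhds 0) :=
        tendsto_one_div_add_atTop_nhds_zero_nat
      have := (tendsto_const_nhds (x := k) (f := atTop)).sub this
      simpa [hu] using this
    have htend3 : Tendsto (fun n => F0 (u n)) atTop (nhds (F0 k)) :=
      hcont.tendsto.comp hukt
    have heq : (fun n => F0 (u n)) = fun n => (μ {ω | h0 ω ≤ u n}).toReal := by
      funext n; rw [hF0]
    rw [heq] at htend3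
    exact tendsto_nhds_unique htend2 htend3
  rw [main, hF0S0, hF1]
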